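/- arXiv:2511.21763 — 2 statements merged into one kernel-verified Lean document; each statement's English description precedes it below -/
import Mathlib

section
/- Let b ∈ L¹((0,1]) be nonnegative a.e., p:[0,1]→(1,∞) with 1 < p⁻ ≤ p(t) ≤ p⁺ < ∞, and 0 ≤ α < β ≤ 1, η₀ ∈ (0,1]. Suppose u:[0,1]→[0,∞) is continuous, satisfies min_{t∈[α,β]} u(t) ≥ η₀ ‖u‖_∞, and ∫₀¹ b(1−s) u(s)^{p(s)} ds = ρ for some ρ > 0. Then ‖u‖_{L^{p(·)}} ≥ η₀ (β−α)^{1/p⁻} · [(ρ/B)^{1/p⁺} + ε₁], where B := ∫₀¹ b(s) ds and ε₁ := (ρ/B)^{1/p⁻} − (ρ/B)^{1/p⁺} if ρ/B < 1 and ε₁ := 0 if ρ/B ≥ 1. -/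
open MeasureTheory Set

/-- Luxemburg norm on [0,1] with variable exponent `p`. -/
noncomputable def luxNorm (p u : ℝ → ℝ) : ℝ :=
  sInf {δ : ℝ | 0 < δ ∧ (∫ x in (0:ℝ)..1, (|u x| / δ) ^ (p x)) ≤ 1}

/-- Supremum norm on [0,1]. -/
noncomputable def supNorm (u : ℝ → ℝ) : ℝ :=
  sSup ((fun t => |u t|) '' Set.Icc (0:ℝ) 1)

theorem stmt7 (u p b : ℝ → ℝ) (pm pp ρ α β η₀ : ℝ)
    (hb : MeasureTheory.IntegrableOn b (Set.Ioc (0:ℝ) 1))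
    (hbnn : ∀ᵐ s ∂(MeasureTheory.volume.restrict (Set.Ioc (0:ℝ) 1)), 0 ≤ b s)
    (hp : Measurable p) (hpm : 1 < pm)
    (hpl : ∀ t ∈ Set.Icc (0:ℝ) 1, pm ≤ p t)
    (hpu : ∀ t ∈ Set.Icc (0:ℝ) 1, p t ≤ pp)
    (hα : 0 ≤ α) (hαβ : α < β) (hβ : β ≤ 1)
    (hη : 0 < η₀) (hη1 : η₀ ≤ 1)
    (hρ : 0 < ρ)
    (hu : ContinuousOn u (Set.Icc (0:ℝ) 1))
    (hpos : ∀ t ∈ Set.Icc (0:ℝ) 1, 0 ≤ u t)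
    (hthick : ∀ t ∈ Set.Icc α β, η₀ * supNorm u ≤ u t)
    (heq : (∫ s in (0:ℝ)..1, b (1 - s) * (u s) ^ (p s)) = ρ) :
    η₀ * (β - α) ^ (1 / pm) *
      ((ρ / (∫ s in (0:ℝ)..1, b s)) ^ (1 / pp) +
        (if ρ / (∫ s in (0:ℝ)..1, b s) < 1 then
          (ρ / (∫ s in (0:ℝ)..1, b s)) ^ (1 / pm) -
            (ρ / (∫ s in (0:ℝ)..1, b s)) ^ (1 / pp)
         else 0)) ≤ luxNorm p u := by
  set B : ℝ := ∫ s in (0:ℝ)..1, b s with hBdef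
  set M : ℝ := supNorm u with hMdef
  have hpm0 : (0:ℝ) < pm := lt_trans zero_lt_one hpm
  have h0Icc : (0:ℝ) ∈ Icc (0:ℝ) 1 := ⟨le_refl 0, zero_le_one⟩
  have hpmpp : pm ≤ pp := le_trans (hpl 0 h0Icc) (hpu 0 h0Icc)
  have hpp0 : (0:ℝ) < pp := lt_of_lt_of_le hpm0 hpmpp
  -- sup-norm bound
  have hMb : ∀ x ∈ Icc (0:ℝ) 1, |u x| ≤ M := by
    intro x hx
    exact le_csSup (isCompact_Icc.image_of_continuousOn hu.abs).bddAbove ⟨x, hx, rfl⟩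
  have hM0 : 0 ≤ M := le_trans (abs_nonneg _) (hMb 0 h0Icc)
  -- rpow max bound
  have hrmax : ∀ t r : ℝ, 0 ≤ t → pm ≤ r → r ≤ pp → t ^ r ≤ max (t ^ pm) (t ^ pp) := by
    intro t r ht h1 h2
    rcases le_total t 1 with h | h
    · rcases eq_or_lt_of_le ht with h0 | h0
      · rw [← h0, Real.zero_rpow (ne_of_gt (lt_of_lt_of_le hpm0 h1))]
        exact le_max_of_le_left (Real.rpow_nonneg (le_refl 0) pm)
      · exact le_max_of_le_left (Real.rpow_le_rpow_of_exponent_ge h0 h h1)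
    · exact le_max_of_le_right (Real.rpow_le_rpow_of_exponent_le h h2)
  set K : ℝ := max (M ^ pm) (M ^ pp) with hKdef
  have hK : ∀ s ∈ Icc (0:ℝ) 1, u s ^ p s ≤ K := by
    intro s hs
    calc u s ^ p s ≤ M ^ p s :=
          Real.rpow_le_rpow (hpos s hs) (le_trans (le_abs_self _) (hMb s hs))
            (le_trans hpm0.le (hpl s hs))
      _ ≤ K := hrmax M (p s) hM0 (hpl s hs) (hpu s hs)
  -- reflected weight is a.e. nonnegative
  have hbnn' : ∀ᵐ s ∂(volume.restrict (Ioc (0:ℝ) 1)), 0 ≤ b (1 - s) := by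
    have hN : volume ({s : ℝ | ¬ 0 ≤ b s} ∩ Ioc (0:ℝ) 1) = 0 := by
      have h := hbnn
      rw [ae_iff, Measure.restrict_apply' measurableSet_Ioc] at h
      exact h
    have hpre : volume ((fun s : ℝ => 1 - s) ⁻¹'
        (({s : ℝ | ¬ 0 ≤ b s} ∩ Ioc (0:ℝ) 1) ∪ {0})) = 0 := by
      apply (Measure.measurePreserving_sub_left volume (1:ℝ)).quasiMeasurePreserving.preimage_null
      exact measure_union_null hN (measure_singleton 0)
    rw [ae_iff, Measure.restrict_apply' measurableSet_Ioc]
    refine measure_mono_null ?_ hpre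
    rintro s ⟨h1, h2⟩
    rw [Set.mem_preimage]
    by_cases hs1 : s = 1
    · right; simp [hs1]
    · left
      have hs2 : s < 1 := lt_of_le_of_ne h2.2 hs1
      exact ⟨h1, Set.mem_Ioc.mpr ⟨by linarith, by linarith [h2.1]⟩⟩
  -- interval integrability of b and its reflection
  have hbI : IntervalIntegrable b volume 0 1 :=
    (intervalIntegrable_iff_integrableOn_Ioc_of_le zero_le_one).2 hb
  have hbrefl : IntervalIntegrable (fun s => b (1 - s)) volume 0 1 := by
    have h := (hbI.comp_sub_left 1).symm
    norm_num at h
    exact h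
  have hBrefl : (∫ s in (0:ℝ)..1, b (1 - s)) = B := by
    have h := intervalIntegral.integral_comp_sub_left (a := 0) (b := 1) b 1
    rw [hBdef]
    simp only [show (1:ℝ) - 1 = 0 by norm_num, show (1:ℝ) - 0 = 1 by norm_num] at h
    exact h
  -- the main integrand is interval integrable (else the integral would be 0 ≠ ρ)
  have hgI : IntervalIntegrable (fun s => b (1 - s) * u s ^ p s) volume 0 1 := by
    by_contra hcon
    rw [intervalIntegral.integral_undef hcon] at heq
    exact hρ.ne' heq.symm
  have hKbI : IntervalIntegrable (fun s => b (1 - s) * K) volume 0 1 := hbrefl.mul_const K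
  -- ρ ≤ K * B
  have hbnnIcc : ∀ᵐ s ∂(volume.restrict (Icc (0:ℝ) 1)), 0 ≤ b (1 - s) := by
    rw [← Measure.restrict_congr_set Ioc_ae_eq_Icc]
    exact hbnn'
  have hρKB : ρ ≤ K * B := by
    have hmono : (∫ s in (0:ℝ)..1, b (1 - s) * u s ^ p s)
        ≤ ∫ s in (0:ℝ)..1, b (1 - s) * K := by
      apply intervalIntegral.integral_mono_ae_restrict zero_le_one hgI hKbI
      filter_upwards [hbnnIcc, ae_restrict_mem measurableSet_Icc] with s h1 h2
      exact mul_le_mul_of_nonneg_left (hK s h2) h1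
    calc ρ = ∫ s in (0:ℝ)..1, b (1 - s) * u s ^ p s := heq.symm
      _ ≤ ∫ s in (0:ℝ)..1, b (1 - s) * K := hmono
      _ = (∫ s in (0:ℝ)..1, b (1 - s)) * K := by
          rw [intervalIntegral.integral_mul_const]
      _ = K * B := by rw [hBrefl, mul_comm]
  -- M > 0
  have hMpos : 0 < M := by
    rcases lt_or_eq_of_le hM0 with h | h
    · exact h
    · exfalso
      have hz : ∀ s ∈ Icc (0:ℝ) 1, b (1 - s) * u s ^ p s = 0 := by
        intro s hs
        have h1 : |u s| ≤ 0 := by rw [h]; exact hMb s hs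
        have hus : u s = 0 := abs_eq_zero.mp (le_antisymm h1 (abs_nonneg _))
        rw [hus, Real.zero_rpow (ne_of_gt (lt_of_lt_of_le hpm0 (hpl s hs))), mul_zero]
      have hzero : (∫ s in (0:ℝ)..1, b (1 - s) * u s ^ p s) = 0 := by
        rw [intervalIntegral.integral_congr (g := fun _ => (0:ℝ))
          (fun s hs => hz s (by rwa [uIcc_of_le zero_le_one] at hs))]
        simp
      rw [hzero] at heq
      exact hρ.ne' heq.symm
  have hKpos : 0 < K := lt_of_lt_of_le (Real.rpow_pos_of_pos hMpos pm) (le_max_left _ _)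
  have hBpos : 0 < B := by nlinarith
  have hq : ρ / B ≤ K := (div_le_iff₀ hBpos).mpr hρKB
  have hqpos : 0 < ρ / B := div_pos hρ hBpos
  -- the bracket is at most M
  have hcM : ((ρ / B) ^ (1 / pp) +
      (if ρ / B < 1 then (ρ / B) ^ (1 / pm) - (ρ / B) ^ (1 / pp) else 0)) ≤ M := by
    by_cases hlt : ρ / B < 1
    · rw [if_pos hlt]
      have : (ρ / B) ^ (1 / pp) + ((ρ / B) ^ (1 / pm) - (ρ / B) ^ (1 / pp))
          = (ρ / B) ^ (1 / pm) := by ring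
      rw [this]
      rcases le_total M 1 with hM1 | hM1
      · have hKeq : K = M ^ pm :=
          max_eq_left (Real.rpow_le_rpow_of_exponent_ge hMpos hM1 hpmpp)
        have hq' : ρ / B ≤ M ^ pm := hKeq ▸ hq
        calc (ρ / B) ^ (1 / pm) ≤ (M ^ pm) ^ (1 / pm) :=
              Real.rpow_le_rpow hqpos.le hq' (by positivity)
          _ = M := by rw [one_div, Real.rpow_rpow_inv hM0 (ne_of_gt hpm0)]
      · exact le_trans (Real.rpow_le_one hqpos.le hlt.le (by positivity)) hM1
    · rw [if_neg hlt, add_zero]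
      push_neg at hlt
      have hM1 : 1 ≤ M := by
        by_contra hM1
        push_neg at hM1
        have h1 : M ^ pm < 1 := Real.rpow_lt_one hM0 hM1 hpm0
        have h2 : M ^ pp < 1 := Real.rpow_lt_one hM0 hM1 hpp0
        have : K < 1 := max_lt h1 h2
        linarith
      have hKeq : K = M ^ pp :=
        max_eq_right (Real.rpow_le_rpow_of_exponent_le hM1 hpmpp)
      have hq' : ρ / B ≤ M ^ pp := hKeq ▸ hq
      calc (ρ / B) ^ (1 / pp) ≤ (M ^ pp) ^ (1 / pp) :=
            Real.rpow_le_rpow hqpos.le hq' (by positivity)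
        _ = M := by rw [one_div, Real.rpow_rpow_inv hM0 (ne_of_gt hpp0)]
  -- facts about β - α
  have hβα0 : (0:ℝ) < β - α := sub_pos.2 hαβ
  have hβα1 : β - α ≤ 1 := by linarith
  have hpow1 : (β - α) ^ (1 / pm) ≤ 1 := Real.rpow_le_one hβα0.le hβα1 (by positivity)
  have hpowpos : 0 < (β - α) ^ (1 / pm) := Real.rpow_pos_of_pos hβα0 _
  -- integrability of the Luxemburg integrand
  have hfI : ∀ δ : ℝ, 0 < δ →
      IntegrableOn (fun x => (|u x| / δ) ^ p x) (Ioc (0:ℝ) 1) volume := by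
    intro δ hδ
    have hmeas : AEMeasurable (fun x => (|u x| / δ) ^ p x)
        (volume.restrict (Ioc (0:ℝ) 1)) := by
      have hu' : AEMeasurable u (volume.restrict (Ioc (0:ℝ) 1)) :=
        (hu.aemeasurable measurableSet_Icc).mono_measure
          (Measure.restrict_mono Ioc_subset_Icc_self le_rfl)
      exact ((measurable_abs.comp_aemeasurable hu').div_const δ).pow hp.aemeasurable
    apply Integrable.mono' (g := fun _ => max ((M / δ) ^ pm) ((M / δ) ^ pp))
      (integrableOn_const measure_Ioc_lt_top.ne) hmeas.aestronglyMeasurable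
    filter_upwards [ae_restrict_mem measurableSet_Ioc] with x hx
    have hx' : x ∈ Icc (0:ℝ) 1 := Ioc_subset_Icc_self hx
    have h1 : (0:ℝ) ≤ (|u x| / δ) ^ p x := Real.rpow_nonneg (by positivity) _
    rw [Real.norm_eq_abs, abs_of_nonneg h1]
    calc (|u x| / δ) ^ p x ≤ (M / δ) ^ p x :=
          Real.rpow_le_rpow (by positivity) ((div_le_div_iff_of_pos_right hδ).mpr (hMb x hx'))
            (le_trans hpm0.le (hpl x hx'))
      _ ≤ _ := hrmax (M / δ) (p x) (by positivity) (hpl x hx') (hpu x hx')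
  have hfI' : ∀ δ : ℝ, 0 < δ →
      IntervalIntegrable (fun x => (|u x| / δ) ^ p x) volume 0 1 := fun δ hδ =>
    (intervalIntegrable_iff_integrableOn_Ioc_of_le zero_le_one).2 (hfI δ hδ)
  -- the admissible set is nonempty
  have hSne : {δ : ℝ | 0 < δ ∧ (∫ x in (0:ℝ)..1, (|u x| / δ) ^ p x) ≤ 1}.Nonempty := by
    refine ⟨M + 1, by positivity, ?_⟩
    have hle : ∀ x ∈ Icc (0:ℝ) 1, (|u x| / (M + 1)) ^ p x ≤ 1 := by
      intro x hx
      apply Real.rpow_le_one (by positivity) ?_ (le_trans hpm0.le (hpl x hx))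
      rw [div_le_one (by positivity)]
      linarith [hMb x hx]
    calc (∫ x in (0:ℝ)..1, (|u x| / (M + 1)) ^ p x) ≤ ∫ _x in (0:ℝ)..1, (1:ℝ) :=
        intervalIntegral.integral_mono_on zero_le_one (hfI' _ (by positivity))
          intervalIntegrable_const hle
      _ = 1 := by simp
  -- every admissible δ is at least η₀ (β-α)^(1/pm) M
  have hLle : ∀ δ ∈ {δ : ℝ | 0 < δ ∧ (∫ x in (0:ℝ)..1, (|u x| / δ) ^ p x) ≤ 1},
      η₀ * (β - α) ^ (1 / pm) * M ≤ δ := by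
    rintro δ ⟨hδ0, hδ1⟩
    by_contra hcon
    push_neg at hcon
    set w : ℝ := (β - α) ^ (1 / pm) with hwdef
    set r : ℝ := η₀ * M / δ with hrdef
    have hrw : w⁻¹ < r := by
      rw [hrdef, lt_div_iff₀ hδ0]
      calc w⁻¹ * δ < w⁻¹ * (η₀ * w * M) :=
            mul_lt_mul_of_pos_left hcon (inv_pos.2 hpowpos)
        _ = η₀ * M * (w⁻¹ * w) := by ring
        _ = η₀ * M := by rw [inv_mul_cancel₀ (ne_of_gt hpowpos), mul_one]
    have hr1 : 1 < r := by
      have hw1 : 1 ≤ w⁻¹ := by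
        nlinarith [mul_inv_cancel₀ (ne_of_gt hpowpos), hpow1, inv_pos.2 hpowpos]
      exact lt_of_le_of_lt hw1 hrw
    have hwpm : w ^ pm = β - α := by
      rw [hwdef, one_div, Real.rpow_inv_rpow hβα0.le (ne_of_gt hpm0)]
    have hrpm : (β - α)⁻¹ < r ^ pm := by
      have h1 : (w⁻¹) ^ pm < r ^ pm :=
        Real.rpow_lt_rpow (inv_nonneg.2 hpowpos.le) hrw hpm0
      rwa [Real.inv_rpow hpowpos.le, hwpm] at h1
    have hcontr : (1:ℝ) < ∫ x in (0:ℝ)..1, (|u x| / δ) ^ p x := by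
      have hsub2 : Ioc α β ⊆ Ioc (0:ℝ) 1 := Ioc_subset_Ioc hα hβ
      have hInt : IntegrableOn (fun x => (|u x| / δ) ^ p x) (Ioc (0:ℝ) 1) volume := hfI δ hδ0
      have hnn : 0 ≤ᵐ[volume.restrict (Ioc (0:ℝ) 1)] fun x => (|u x| / δ) ^ p x :=
        ae_of_all _ fun x => Real.rpow_nonneg (by positivity) _
      have hstep1 : (∫ x in Ioc α β, (|u x| / δ) ^ p x)
          ≤ ∫ x in Ioc (0:ℝ) 1, (|u x| / δ) ^ p x :=
        setIntegral_mono_set hInt hnn (HasSubset.Subset.eventuallyLE hsub2)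
      have hptw : ∀ x ∈ Ioc α β, r ^ pm ≤ (|u x| / δ) ^ p x := by
        intro x hx
        have hxαβ : x ∈ Icc α β := Ioc_subset_Icc_self hx
        have hx01 : x ∈ Icc (0:ℝ) 1 := Icc_subset_Icc hα hβ hxαβ
        have hux : η₀ * M ≤ u x := hthick x hxαβ
        have habs : |u x| = u x := abs_of_nonneg (hpos x hx01)
        have hbase : r ≤ |u x| / δ := by
          rw [habs, hrdef]
          exact (div_le_div_iff_of_pos_right hδ0).mpr hux
        calc r ^ pm ≤ r ^ p x :=
              Real.rpow_le_rpow_of_exponent_le hr1.le (hpl x hx01)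
          _ ≤ (|u x| / δ) ^ p x :=
              Real.rpow_le_rpow (le_trans zero_le_one hr1.le) hbase
                (le_trans hpm0.le (hpl x hx01))
      have hstep2 : (β - α) * r ^ pm ≤ ∫ x in Ioc α β, (|u x| / δ) ^ p x := by
        have hconst : (∫ _x in Ioc α β, r ^ pm ∂volume) = (β - α) * r ^ pm := by
          rw [setIntegral_const, measureReal_def, Real.volume_Ioc, ENNReal.toReal_ofReal hβα0.le, smul_eq_mul]
        rw [← hconst]
        exact setIntegral_mono_on (integrableOn_const measure_Ioc_lt_top.ne)
          (hInt.mono_set hsub2) measurableSet_Ioc hptw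
      have hgt : 1 < (β - α) * r ^ pm := by
        calc (1:ℝ) = (β - α) * (β - α)⁻¹ := (mul_inv_cancel₀ (ne_of_gt hβα0)).symm
          _ < (β - α) * r ^ pm := mul_lt_mul_of_pos_left hrpm hβα0
      calc (1:ℝ) < (β - α) * r ^ pm := hgt
        _ ≤ ∫ x in Ioc α β, (|u x| / δ) ^ p x := hstep2
        _ ≤ ∫ x in Ioc (0:ℝ) 1, (|u x| / δ) ^ p x := hstep1
        _ = ∫ x in (0:ℝ)..1, (|u x| / δ) ^ p x :=
            (intervalIntegral.integral_of_le zero_le_one).symm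
    linarith
  have hlux : η₀ * (β - α) ^ (1 / pm) * M ≤ luxNorm p u := by
    rw [luxNorm]
    exact le_csInf hSne hLle
  exact le_trans (mul_le_mul_of_nonneg_left hcM (by positivity)) hlux
end

section
/- Let p ∈ (1,∞) be a constant exponent, C₀ ∈ (0,1), η₀ ∈ (0,1], and 0 ≤ α < β ≤ 1 with β−α < C₀. Then there exists a continuous function u:[0,1]→[0,∞) such that min_{t∈[α,β]} u(t) ≥ η₀‖u‖_∞ and ∫₀¹ u(t) dt ≥ C₀‖u‖_{L^p}, but ∫₀¹ u(t) dt < C₀‖u‖_∞; i.e. the hybrid cone strictly contains the sup-norm cone. -/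
open MeasureTheory Set

set_option maxHeartbeats 1600000 in
theorem stmt14 (pc α β η₀ C₀ : ℝ)
    (hpc : 1 < pc)
    (hC : 0 < C₀) (hC1 : C₀ < 1)
    (hη : 0 < η₀) (hη1 : η₀ ≤ 1)
    (hα : 0 ≤ α) (hαβ : α < β) (hβ : β ≤ 1)
    (hgap : β - α < C₀) :
    ∃ u : ℝ → ℝ, ContinuousOn u (Set.Icc (0:ℝ) 1)
      ∧ (∀ t ∈ Set.Icc (0:ℝ) 1, 0 ≤ u t)
      ∧ (∀ t ∈ Set.Icc α β, η₀ * supNorm u ≤ u t)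
      ∧ C₀ * (∫ t in (0:ℝ)..1, (u t) ^ pc) ^ (1 / pc) ≤ ∫ t in (0:ℝ)..1, u t
      ∧ (∫ t in (0:ℝ)..1, u t) < C₀ * supNorm u := by
  -- constants
  have hpc0 : (0:ℝ) < pc := by linarith
  set q : ℝ := pc / (pc - 1) with hq
  have hq1 : 1 < q := by
    rw [hq, lt_div_iff₀ (by linarith)]; linarith
  have hCq : C₀ ^ q < C₀ := by
    have := Real.rpow_lt_rpow_of_exponent_gt hC hC1 hq1
    rwa [Real.rpow_one] at this
  have hCq0 : 0 < C₀ ^ q := Real.rpow_pos_of_pos hC q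
  set M : ℝ := max (C₀ ^ q) (β - α) with hMdef
  have hM : M < C₀ := max_lt hCq hgap
  set I : ℝ := (M + C₀) / 2 with hIdef
  have hMI : M < I := by rw [hIdef]; linarith
  have hIC : I < C₀ := by rw [hIdef]; linarith
  have hβαI : β - α < I := lt_of_le_of_lt (le_max_right _ _) hMI
  have hCqI : C₀ ^ q ≤ I := le_of_lt (lt_of_le_of_lt (le_max_left _ _) hMI)
  have hI1 : I < 1 := hIC.trans hC1
  have hIpos : 0 < I := lt_of_le_of_lt hCq0.le (lt_of_le_of_lt (le_max_left _ _) hMI)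
  have hDpos : (0:ℝ) < 1 - (β - α) := by linarith
  set c : ℝ := (I - (β - α)) / (1 - (β - α)) with hcdef
  have hc0 : 0 < c := div_pos (by linarith) hDpos
  have hc1 : c < 1 := by rw [hcdef, div_lt_one hDpos]; linarith
  have hcI : c * (1 - (β - α)) + (β - α) = I := by
    rw [hcdef]; field_simp; ring
  set ε : ℝ := (C₀ - I) / 4 with hεdef
  have hε : 0 < ε := by rw [hεdef]; linarith
  -- the function
  set g : ℝ → ℝ := fun t => max 0 (min 1 (1 - (max (α - t) (t - β)) / ε)) with hg
  set u : ℝ → ℝ := fun t => c + (1 - c) * g t with hu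
  have hgcont : Continuous g := by
    apply continuous_const.max
    apply continuous_const.min
    fun_prop
  have hucont : Continuous u := by fun_prop
  have hg0 : ∀ t, 0 ≤ g t := fun t => le_max_left _ _
  have hg1 : ∀ t, g t ≤ 1 := fun t => max_le zero_le_one (min_le_left _ _)
  have hu_lb : ∀ t, c ≤ u t := by
    intro t
    have : 0 ≤ (1 - c) * g t := mul_nonneg (by linarith) (hg0 t)
    simp only [hu]; linarith
  have hu_ub : ∀ t, u t ≤ 1 := by
    intro t
    have : (1 - c) * g t ≤ (1 - c) * 1 := by
      exact mul_le_mul_of_nonneg_left (hg1 t) (by linarith)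
    simp only [hu]; linarith
  have hu_pos : ∀ t, 0 ≤ u t := fun t => hc0.le.trans (hu_lb t)
  have hu_plateau : ∀ t ∈ Set.Icc α β, u t = 1 := by
    intro t ht
    have hd : max (α - t) (t - β) ≤ 0 := max_le (by linarith [ht.1]) (by linarith [ht.2])
    have h1 : 1 ≤ 1 - (max (α - t) (t - β)) / ε := by
      have : (max (α - t) (t - β)) / ε ≤ 0 := div_nonpos_of_nonpos_of_nonneg hd hε.le
      linarith
    have : g t = 1 := by
      rw [hg]; simp only
      rw [min_eq_left h1, max_eq_right zero_le_one]
    simp only [hu, this]; ring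
  have hu_out : ∀ t, (t ≤ α - ε ∨ β + ε ≤ t) → u t = c := by
    intro t ht
    have hd : ε ≤ max (α - t) (t - β) := by
      rcases ht with h | h
      · exact le_max_of_le_left (by linarith)
      · exact le_max_of_le_right (by linarith)
    have h1 : 1 - (max (α - t) (t - β)) / ε ≤ 0 := by
      have : 1 ≤ (max (α - t) (t - β)) / ε := (one_le_div hε).2 hd
      linarith
    have : g t = 0 := by
      rw [hg]; simp only
      rw [min_eq_right (h1.trans zero_le_one), max_eq_left h1]
    simp only [hu, this]; ring
  -- supNorm u = 1
  have hsup : supNorm u = 1 := by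
    unfold supNorm
    apply le_antisymm
    · apply Real.sSup_le
      · rintro x ⟨t, ht, rfl⟩
        show |u t| ≤ 1
        rw [abs_of_nonneg (hu_pos t)]; exact hu_ub t
      · linarith
    · apply le_csSup
      · refine ⟨1, ?_⟩
        rintro x ⟨t, ht, rfl⟩
        show |u t| ≤ 1
        rw [abs_of_nonneg (hu_pos t)]; exact hu_ub t
      · refine ⟨α, ⟨hα, by linarith⟩, ?_⟩
        show |u α| = 1
        rw [hu_plateau α ⟨le_refl α, hαβ.le⟩, abs_one]
  -- integrability
  have hint : ∀ x y : ℝ, IntervalIntegrable u volume x y :=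
    fun x y => hucont.intervalIntegrable x y
  have hupc_cont : Continuous (fun t => u t ^ pc) :=
    hucont.rpow_const (fun t => Or.inr hpc0.le)
  have hintp : IntervalIntegrable (fun t => u t ^ pc) volume 0 1 :=
    hupc_cont.intervalIntegrable 0 1
  -- middle integral
  have hmid : ∫ t in α..β, u t = β - α := by
    have he : EqOn u (fun _ => (1:ℝ)) (Set.uIcc α β) := by
      intro t ht
      rw [Set.uIcc_of_le hαβ.le] at ht
      exact hu_plateau t ht
    rw [intervalIntegral.integral_congr he, intervalIntegral.integral_const]
    simp
  -- lower bound on the integral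
  have hsplit : ∫ t in (0:ℝ)..1, u t
      = (∫ t in (0:ℝ)..α, u t) + (∫ t in α..β, u t) + (∫ t in β..(1:ℝ), u t) := by
    rw [intervalIntegral.integral_add_adjacent_intervals (hint 0 α) (hint α β),
        intervalIntegral.integral_add_adjacent_intervals (hint 0 β) (hint β 1)]
  have hJI : I ≤ ∫ t in (0:ℝ)..1, u t := by
    have hA : α * c ≤ ∫ t in (0:ℝ)..α, u t := by
      have := intervalIntegral.integral_mono_on hα (intervalIntegrable_const (c := c))
        (hint 0 α) (fun t _ => hu_lb t)
      rwa [intervalIntegral.integral_const, sub_zero, smul_eq_mul] at this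
    have hB : (1 - β) * c ≤ ∫ t in β..(1:ℝ), u t := by
      have := intervalIntegral.integral_mono_on hβ (intervalIntegrable_const (c := c))
        (hint β 1) (fun t _ => hu_lb t)
      rwa [intervalIntegral.integral_const, smul_eq_mul] at this
    rw [hsplit, hmid]
    have e0 : α * c + (β - α) + (1 - β) * c = I := by linear_combination hcI
    linarith
  -- upper bound on the integral
  set a : ℝ := max 0 (α - ε) with hadef
  set b : ℝ := min 1 (β + ε) with hbdef
  have ha0 : 0 ≤ a := le_max_left _ _
  have haα : a ≤ α := max_le hα (by linarith)
  have hbβ : β ≤ b := le_min hβ (by linarith)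
  have hb1 : b ≤ 1 := min_le_left _ _
  have hab : a ≤ b := haα.trans (hαβ.le.trans hbβ)
  have haε : α - ε ≤ a := le_max_right _ _
  have hbε : b ≤ β + ε := min_le_right _ _
  have hsplit2 : ∫ t in (0:ℝ)..1, u t
      = (∫ t in (0:ℝ)..a, u t) + (∫ t in a..b, u t) + (∫ t in b..(1:ℝ), u t) := by
    rw [intervalIntegral.integral_add_adjacent_intervals (hint 0 a) (hint a b),
        intervalIntegral.integral_add_adjacent_intervals (hint 0 b) (hint b 1)]
  have hA' : ∫ t in (0:ℝ)..a, u t ≤ a * c := by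
    rcases le_or_gt (α - ε) 0 with h | h
    · have ha : a = 0 := max_eq_left h
      rw [ha, intervalIntegral.integral_same]
      positivity
    · have ha : a = α - ε := max_eq_right h.le
      have he : EqOn u (fun _ => c) (Set.uIcc 0 a) := by
        intro t ht
        rw [Set.uIcc_of_le ha0] at ht
        exact hu_out t (Or.inl (by rw [ha] at ht; exact ht.2))
      rw [intervalIntegral.integral_congr he, intervalIntegral.integral_const, sub_zero,
        smul_eq_mul]
  have hB' : ∫ t in b..(1:ℝ), u t ≤ (1 - b) * c := by
    rcases le_or_gt 1 (β + ε) with h | h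
    · have hb : b = 1 := min_eq_left h
      rw [hb, intervalIntegral.integral_same]
      simp
    · have hb : b = β + ε := min_eq_right h.le
      have he : EqOn u (fun _ => c) (Set.uIcc b 1) := by
        intro t ht
        rw [Set.uIcc_of_le hb1] at ht
        exact hu_out t (Or.inr (by rw [hb] at ht; exact ht.1))
      rw [intervalIntegral.integral_congr he, intervalIntegral.integral_const, smul_eq_mul]
  have hmid' : ∫ t in a..b, u t ≤ b - a := by
    have := intervalIntegral.integral_mono_on hab (hint a b)
      (intervalIntegrable_const (c := (1:ℝ))) (fun t _ => hu_ub t)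
    rwa [intervalIntegral.integral_const, smul_eq_mul, mul_one] at this
  have hJC : (∫ t in (0:ℝ)..1, u t) < C₀ := by
    rw [hsplit2]
    have h1 : b - a ≤ β - α + 2 * ε := by linarith
    have h2 : (1 - c) * (b - a) ≤ (1 - c) * (β - α + 2 * ε) :=
      mul_le_mul_of_nonneg_left h1 (by linarith)
    have e1 : a * c + (b - a) + (1 - b) * c = c + (1 - c) * (b - a) := by ring
    have e2 : c + (1 - c) * (β - α + 2 * ε) = I + (1 - c) * (2 * ε) := by
      linear_combination hcI
    have e3 : (1 - c) * (2 * ε) ≤ 2 * ε := by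
      have h4 : 0 ≤ c * (2 * ε) := by positivity
      nlinarith
    have e4 : ε = (C₀ - I) / 4 := hεdef
    linarith
  -- the rpow inequality
  have hupc : ∀ t, u t ^ pc ≤ u t := by
    intro t
    have := Real.rpow_le_rpow_of_exponent_ge (lt_of_lt_of_le hc0 (hu_lb t)) (hu_ub t) hpc.le
    rwa [Real.rpow_one] at this
  have hPle : (∫ t in (0:ℝ)..1, u t ^ pc) ≤ ∫ t in (0:ℝ)..1, u t :=
    intervalIntegral.integral_mono_on zero_le_one hintp (hint 0 1) (fun t _ => hupc t)
  have hPnn : 0 ≤ ∫ t in (0:ℝ)..1, u t ^ pc :=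
    intervalIntegral.integral_nonneg zero_le_one (fun t _ => Real.rpow_nonneg (hu_pos t) pc)
  have hJpos : 0 < ∫ t in (0:ℝ)..1, u t := lt_of_lt_of_le hIpos hJI
  have step1 : (∫ t in (0:ℝ)..1, u t ^ pc) ^ (1/pc) ≤ (∫ t in (0:ℝ)..1, u t) ^ (1/pc) :=
    Real.rpow_le_rpow hPnn hPle (by positivity)
  have step2 : C₀ ≤ (∫ t in (0:ℝ)..1, u t) ^ ((pc-1)/pc) := by
    calc C₀ = (C₀ ^ q) ^ ((pc-1)/pc) := by
          rw [← Real.rpow_mul hC.le]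
          have hqe : q * ((pc-1)/pc) = 1 := by
            rw [hq]
            rw [div_mul_div_comm, mul_comm (pc - 1) pc]
            have : pc * (pc - 1) ≠ 0 := by
              apply mul_ne_zero (ne_of_gt hpc0) (by linarith)
            exact div_self this
          rw [hqe, Real.rpow_one]
      _ ≤ _ := Real.rpow_le_rpow hCq0.le (hCqI.trans hJI)
          (div_nonneg (by linarith) hpc0.le)
  have cond4 : C₀ * (∫ t in (0:ℝ)..1, u t ^ pc) ^ (1/pc) ≤ ∫ t in (0:ℝ)..1, u t := by
    calc C₀ * (∫ t in (0:ℝ)..1, u t ^ pc) ^ (1/pc)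
        ≤ C₀ * (∫ t in (0:ℝ)..1, u t) ^ (1/pc) :=
          mul_le_mul_of_nonneg_left step1 hC.le
      _ ≤ (∫ t in (0:ℝ)..1, u t) ^ ((pc-1)/pc) * (∫ t in (0:ℝ)..1, u t) ^ (1/pc) :=
          mul_le_mul_of_nonneg_right step2 (Real.rpow_nonneg hJpos.le _)
      _ = (∫ t in (0:ℝ)..1, u t) ^ ((pc-1)/pc + 1/pc) := (Real.rpow_add hJpos _ _).symm
      _ = ∫ t in (0:ℝ)..1, u t := by
          rw [show (pc-1)/pc + 1/pc = 1 by field_simp; ring, Real.rpow_one]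
  refine ⟨u, hucont.continuousOn, fun t _ => hu_pos t, ?_, cond4, ?_⟩
  · intro t ht
    rw [hsup, mul_one, hu_plateau t ht]
    exact hη1
  · rw [hsup, mul_one]
    exact hJC
end
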